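/- If finite random variables U, X, Y satisfy U → X → Y and X → U → Y, then I(X, Y ∧ U) ≥ H(g(X)) for any function g of X such that g(X) is almost surely a function of U and X → g(X) → Y holds; in particular I(X,Y ∧ U) = I(X ∧ U). -/

import Mathlib

open scoped Classical
open Finset Real

noncomputable section

variable {Ω : Type*} [Fintype Ω]

/-- Pushforward probability of value `x` under random variable `X` w.r.t. pmf `p`. -/
def dist' {α : Type*} (p : Ω → ℝ) (X : Ω → α) (x : α) : ℝ :=
  ∑ ω, if X ω = x then p ω else 0

/-- Shannon entropy, base 2. -/
def ent {α : Type*} [Fintype α] (p : Ω → ℝ) (X : Ω → α) : ℝ :=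
  -∑ x, dist' p X x * Real.logb 2 (dist' p X x)

/-- Conditional entropy `H(X | Y)`. -/
def condEnt {α β : Type*} [Fintype α] [Fintype β] (p : Ω → ℝ) (X : Ω → α) (Y : Ω → β) : ℝ :=
  ent p (fun ω => (X ω, Y ω)) - ent p Y

/-- Mutual information `I(X ∧ Y)`. -/
def mi {α β : Type*} [Fintype α] [Fintype β] (p : Ω → ℝ) (X : Ω → α) (Y : Ω → β) : ℝ :=
  ent p X + ent p Y - ent p (fun ω => (X ω, Y ω))

/-- Conditional mutual information `I(X ∧ Y | Z)`. -/
def cmi {α β γ : Type*} [Fintype α] [Fintype β] [Fintype γ]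
    (p : Ω → ℝ) (X : Ω → α) (Y : Ω → β) (Z : Ω → γ) : ℝ :=
  ent p (fun ω => (X ω, Z ω)) + ent p (fun ω => (Y ω, Z ω))
    - ent p (fun ω => ((X ω, Y ω), Z ω)) - ent p Z

/-- `p` is a probability mass function on `Ω`. -/
def IsPMF (p : Ω → ℝ) : Prop := (∀ ω, 0 ≤ p ω) ∧ ∑ ω, p ω = 1

set_option linter.unusedSectionVars false
set_option maxHeartbeats 1000000

lemma dist'_nonneg {α : Type*} {p : Ω → ℝ} (hp : ∀ ω, 0 ≤ p ω) (X : Ω → α) (x : α) :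
    0 ≤ dist' p X x := by
  refine Finset.sum_nonneg fun ω _ => ?_
  split
  · exact hp ω
  · exact le_refl 0

section margins
variable {α β γ : Type*} [Fintype α] [Fintype β] [Fintype γ]
  (p : Ω → ℝ) (A : Ω → α) (B : Ω → β) (C : Ω → γ)

lemma marg_snd (y : β) :
    ∑ x, dist' p (fun ω => (A ω, B ω)) (x, y) = dist' p B y := by
  unfold dist'
  rw [Finset.sum_comm]
  refine Finset.sum_congr rfl fun ω _ => ?_
  by_cases hB : B ω = y <;> simp [hB, Prod.ext_iff]

lemma marg_AC (a : α) (c : γ) :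
    ∑ b, dist' p (fun ω => ((A ω, B ω), C ω)) ((a, b), c) = dist' p (fun ω => (A ω, C ω)) (a, c) := by
  unfold dist'
  rw [Finset.sum_comm]
  refine Finset.sum_congr rfl fun ω _ => ?_
  by_cases hA : A ω = a <;> by_cases hC : C ω = c <;> simp [hA, hC, Prod.ext_iff]

lemma marg_BC (b : β) (c : γ) :
    ∑ a, dist' p (fun ω => ((A ω, B ω), C ω)) ((a, b), c) = dist' p (fun ω => (B ω, C ω)) (b, c) := by
  unfold dist'
  rw [Finset.sum_comm]
  refine Finset.sum_congr rfl fun ω _ => ?_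
  by_cases hB : B ω = b <;> by_cases hC : C ω = c <;> simp [hB, hC, Prod.ext_iff]

lemma marg_C (c : γ) :
    ∑ a, ∑ b, dist' p (fun ω => ((A ω, B ω), C ω)) ((a, b), c) = dist' p C c := by
  have h : ∀ a, ∑ b, dist' p (fun ω => ((A ω, B ω), C ω)) ((a, b), c)
      = dist' p (fun ω => (A ω, C ω)) (a, c) := marg_AC p A B C (c := c)
  rw [Finset.sum_congr rfl fun a _ => h a]
  exact marg_snd p A C c

end margins

lemma sum_comm3 {α β γ M : Type*} [Fintype α] [Fintype β] [Fintype γ] [AddCommMonoid M]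
    (F : α → β → γ → M) :
    ∑ a, ∑ b, ∑ c, F a b c = ∑ c, ∑ a, ∑ b, F a b c := by
  calc ∑ a, ∑ b, ∑ c, F a b c
      = ∑ a, ∑ c, ∑ b, F a b c := Finset.sum_congr rfl fun a _ => Finset.sum_comm
    _ = ∑ c, ∑ a, ∑ b, F a b c := Finset.sum_comm

lemma ent_mul_log2 {α : Type*} [Fintype α] (p : Ω → ℝ) (V : Ω → α) :
    ent p V * Real.log 2 = -∑ x, dist' p V x * Real.log (dist' p V x) := by
  unfold ent
  rw [neg_mul, Finset.sum_mul, neg_inj]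
  refine Finset.sum_congr rfl fun x _ => ?_
  rw [Real.logb]
  have h2 : Real.log 2 ≠ 0 := ne_of_gt (Real.log_pos one_lt_two)
  field_simp

lemma cmi_nonneg {α β γ : Type*} [Fintype α] [Fintype β] [Fintype γ]
    (p : Ω → ℝ) (hp : IsPMF p) (A : Ω → α) (B : Ω → β) (C : Ω → γ) :
    0 ≤ cmi p A B C := by
  obtain ⟨hp0, _⟩ := hp
  set q : α → β → γ → ℝ := fun a b c => dist' p (fun ω => ((A ω, B ω), C ω)) ((a, b), c) with hqdef
  set m1 : α → γ → ℝ := fun a c => ∑ b, q a b c with hm1def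
  set m2 : β → γ → ℝ := fun b c => ∑ a, q a b c with hm2def
  set mc : γ → ℝ := fun c => ∑ a, ∑ b, q a b c with hmcdef
  have hq0 : ∀ a b c, 0 ≤ q a b c := fun a b c => dist'_nonneg hp0 _ _
  have hm10 : ∀ a c, 0 ≤ m1 a c := fun a c => Finset.sum_nonneg fun b _ => hq0 a b c
  have hm20 : ∀ b c, 0 ≤ m2 b c := fun b c => Finset.sum_nonneg fun a _ => hq0 a b c
  have hmc0 : ∀ c, 0 ≤ mc c := fun c =>
    Finset.sum_nonneg fun a _ => Finset.sum_nonneg fun b _ => hq0 a b c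
  have hl2 : (0:ℝ) < Real.log 2 := Real.log_pos one_lt_two
  -- entropy identities
  have eAC : ent p (fun ω => (A ω, C ω)) * Real.log 2
      = -∑ c, ∑ a, m1 a c * Real.log (m1 a c) := by
    rw [ent_mul_log2, Fintype.sum_prod_type, Finset.sum_comm, neg_inj]
    refine Finset.sum_congr rfl fun c _ => Finset.sum_congr rfl fun a _ => ?_
    rw [← marg_AC p A B C a c]
  have eBC : ent p (fun ω => (B ω, C ω)) * Real.log 2
      = -∑ c, ∑ b, m2 b c * Real.log (m2 b c) := by
    rw [ent_mul_log2, Fintype.sum_prod_type, Finset.sum_comm, neg_inj]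
    refine Finset.sum_congr rfl fun c _ => Finset.sum_congr rfl fun b _ => ?_
    rw [← marg_BC p A B C b c]
  have eC : ent p C * Real.log 2 = -∑ c, mc c * Real.log (mc c) := by
    rw [ent_mul_log2, neg_inj]
    refine Finset.sum_congr rfl fun c _ => ?_
    rw [← marg_C p A B C c]
  have eABC : ent p (fun ω => ((A ω, B ω), C ω)) * Real.log 2
      = -∑ c, ∑ a, ∑ b, q a b c * Real.log (q a b c) := by
    rw [ent_mul_log2, Fintype.sum_prod_type, Fintype.sum_prod_type, neg_inj, sum_comm3]
  -- per-c expansion of the integrand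
  have expand : ∀ c, ∑ a, ∑ b, q a b c *
        (Real.log (q a b c) + Real.log (mc c) - Real.log (m1 a c) - Real.log (m2 b c))
      = (∑ a, ∑ b, q a b c * Real.log (q a b c)) + mc c * Real.log (mc c)
        - (∑ a, m1 a c * Real.log (m1 a c)) - (∑ b, m2 b c * Real.log (m2 b c)) := by
    intro c
    have t1 : ∑ a, ∑ b, q a b c * Real.log (m1 a c) = ∑ a, m1 a c * Real.log (m1 a c) :=
      Finset.sum_congr rfl fun a _ => by rw [← Finset.sum_mul]
    have t2 : ∑ a, ∑ b, q a b c * Real.log (m2 b c) = ∑ b, m2 b c * Real.log (m2 b c) := by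
      rw [Finset.sum_comm]
      exact Finset.sum_congr rfl fun b _ => by rw [← Finset.sum_mul]
    have t3 : ∑ a, ∑ b, q a b c * Real.log (mc c) = mc c * Real.log (mc c) := by
      calc ∑ a, ∑ b, q a b c * Real.log (mc c)
          = ∑ a, (∑ b, q a b c) * Real.log (mc c) :=
            Finset.sum_congr rfl fun a _ => by rw [← Finset.sum_mul]
        _ = (∑ a, ∑ b, q a b c) * Real.log (mc c) := by rw [← Finset.sum_mul]
        _ = mc c * Real.log (mc c) := rfl
    simp only [mul_add, mul_sub, Finset.sum_add_distrib, Finset.sum_sub_distrib]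
    rw [t1, t2, t3]
  -- the key identity
  have key : cmi p A B C * Real.log 2
      = ∑ c, ∑ a, ∑ b, q a b c *
        (Real.log (q a b c) + Real.log (mc c) - Real.log (m1 a c) - Real.log (m2 b c)) := by
    unfold cmi
    rw [sub_mul, sub_mul, add_mul, eAC, eBC, eABC, eC]
    rw [Finset.sum_congr rfl fun c _ => expand c]
    simp only [Finset.sum_add_distrib, Finset.sum_sub_distrib]
    ring
  -- termwise bound
  have bound : ∀ c a b, -(q a b c *
        (Real.log (q a b c) + Real.log (mc c) - Real.log (m1 a c) - Real.log (m2 b c)))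
      ≤ (if 0 < mc c then m1 a c * m2 b c / mc c else 0) - q a b c := by
    intro c a b
    rcases eq_or_lt_of_le (hq0 a b c) with hq | hq
    · rw [← hq]
      have hnn : 0 ≤ (if 0 < mc c then m1 a c * m2 b c / mc c else 0) := by
        split
        · exact div_nonneg (mul_nonneg (hm10 a c) (hm20 b c)) (hmc0 c)
        · exact le_refl 0
      simp only [zero_mul, neg_zero, sub_zero]
      exact hnn
    · have hqm1 : q a b c ≤ m1 a c := Finset.single_le_sum (fun b' _ => hq0 a b' c) (Finset.mem_univ b)
      have hqm2 : q a b c ≤ m2 b c := Finset.single_le_sum (fun a' _ => hq0 a' b c) (Finset.mem_univ a)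
      have hm1mc : m1 a c ≤ mc c := by
        have := Finset.single_le_sum (fun a' (_ : a' ∈ Finset.univ) => hm10 a' c) (Finset.mem_univ a)
        exact this
      have h1 : 0 < m1 a c := lt_of_lt_of_le hq hqm1
      have h2 : 0 < m2 b c := lt_of_lt_of_le hq hqm2
      have hc : 0 < mc c := lt_of_lt_of_le h1 hm1mc
      rw [if_pos hc]
      have hratio : 0 < m1 a c * m2 b c / (q a b c * mc c) := by positivity
      have hlog : Real.log (m1 a c * m2 b c / (q a b c * mc c))
          = Real.log (m1 a c) + Real.log (m2 b c) - Real.log (q a b c) - Real.log (mc c) := by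
        rw [Real.log_div (by positivity) (by positivity), Real.log_mul h1.ne' h2.ne',
          Real.log_mul hq.ne' hc.ne']
        ring
      have hle := Real.log_le_sub_one_of_pos hratio
      have hmul := mul_le_mul_of_nonneg_left hle (le_of_lt hq)
      have hid : q a b c * (m1 a c * m2 b c / (q a b c * mc c) - 1)
          = m1 a c * m2 b c / mc c - q a b c := by
        field_simp
      rw [hlog] at hmul
      nlinarith [hmul, hid]
  -- summing the bound
  have sumbound : ∑ c, ∑ a, ∑ b,
      ((if 0 < mc c then m1 a c * m2 b c / mc c else 0) - q a b c) ≤ 0 := by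
    refine Finset.sum_nonpos fun c _ => ?_
    have hsplit : ∑ a, ∑ b, ((if 0 < mc c then m1 a c * m2 b c / mc c else 0) - q a b c)
        = (∑ a, ∑ b, (if 0 < mc c then m1 a c * m2 b c / mc c else 0)) - mc c := by
      simp only [Finset.sum_sub_distrib]
      rfl
    rw [hsplit]
    by_cases hc : 0 < mc c
    · simp only [if_pos hc]
      have hsum2 : ∑ b, m2 b c = mc c := Finset.sum_comm
      have hval : ∑ a, ∑ b, m1 a c * m2 b c / mc c = mc c := by
        have h1 : ∀ a, ∑ b, m1 a c * m2 b c / mc c = m1 a c := by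
          intro a
          rw [← Finset.sum_div, ← Finset.mul_sum, hsum2, mul_div_assoc, div_self hc.ne', mul_one]
        rw [Finset.sum_congr rfl fun a _ => h1 a]
      rw [hval]
      simp
    · simp only [if_neg hc]
      simp only [Finset.sum_const_zero]
      have := hmc0 c
      linarith
  -- combine
  have hstep : ∑ c, ∑ a, ∑ b, -(q a b c *
        (Real.log (q a b c) + Real.log (mc c) - Real.log (m1 a c) - Real.log (m2 b c)))
      ≤ ∑ c, ∑ a, ∑ b, ((if 0 < mc c then m1 a c * m2 b c / mc c else 0) - q a b c) :=
    Finset.sum_le_sum fun c _ => Finset.sum_le_sum fun a _ => Finset.sum_le_sum fun b _ =>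
      bound c a b
  have hkey2 : 0 ≤ cmi p A B C * Real.log 2 := by
    rw [key]
    simp only [Finset.sum_neg_distrib] at hstep
    linarith [le_trans hstep sumbound]
  have := div_nonneg hkey2 hl2.le
  rwa [mul_div_assoc, div_self hl2.ne', mul_one] at this

lemma sum_dist' {α : Type*} [Fintype α] (p : Ω → ℝ) (X : Ω → α) :
    ∑ x, dist' p X x = ∑ ω, p ω := by
  unfold dist'
  rw [Finset.sum_comm]
  refine Finset.sum_congr rfl fun ω _ => ?_
  simp

lemma ent_congr_dist {α : Type*} [Fintype α] {p : Ω → ℝ} {V W : Ω → α}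
    (h : ∀ x, dist' p V x = dist' p W x) : ent p V = ent p W := by
  unfold ent
  congr 1
  exact Finset.sum_congr rfl fun x _ => by rw [h x]

lemma dist'_comp_inj_apply {α β : Type*} {p : Ω → ℝ} (V : Ω → α) {e : α → β}
    (he : Function.Injective e) (a : α) :
    dist' p (fun ω => e (V ω)) (e a) = dist' p V a := by
  unfold dist'
  refine Finset.sum_congr rfl fun ω _ => ?_
  simp [he.eq_iff]

lemma ent_comp_inj {α β : Type*} [Fintype α] [Fintype β] (p : Ω → ℝ) (V : Ω → α) {e : α → β}
    (he : Function.Injective e) : ent p (fun ω => e (V ω)) = ent p V := by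
  unfold ent
  congr 1
  rw [← Finset.sum_subset (Finset.subset_univ (Finset.univ.image e))]
  · rw [Finset.sum_image (fun a _ b _ h => he h)]
    refine Finset.sum_congr rfl fun a _ => ?_
    rw [dist'_comp_inj_apply V he]
  · intro b _ hb
    have h0 : dist' p (fun ω => e (V ω)) b = 0 := by
      refine Finset.sum_eq_zero fun ω _ => ?_
      have : e (V ω) ≠ b := fun h => hb (Finset.mem_image.2 ⟨V ω, Finset.mem_univ _, h⟩)
      simp [this]
    rw [h0]
    simp

lemma ent_congr_ae {α : Type*} [Fintype α] {p : Ω → ℝ} {V W : Ω → α}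
    (h : ∀ ω, p ω ≠ 0 → V ω = W ω) : ent p V = ent p W := by
  refine ent_congr_dist fun x => ?_
  unfold dist'
  refine Finset.sum_congr rfl fun ω _ => ?_
  by_cases hω : p ω = 0
  · simp [hω]
  · rw [h ω hω]

/-- Under the double Markov conditions, `I(X,Y ∧ U) ≥ H(g(X))` for any `g(X)` that is a.s.
a function of `U` and satisfies `X -∘- g(X) -∘- Y`; in particular `I(X,Y ∧ U) = I(X ∧ U)`. -/
theorem stmt3 {Ω 𝒰 𝒳 𝒴 γ : Type*} [Fintype Ω] [Fintype 𝒰] [Fintype 𝒳] [Fintype 𝒴] [Fintype γ]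
    (p : Ω → ℝ) (hp : IsPMF p) (U : Ω → 𝒰) (X : Ω → 𝒳) (Y : Ω → 𝒴)
    (h1 : cmi p U Y X = 0) (h2 : cmi p X Y U = 0)
    (g : 𝒳 → γ) (f : 𝒰 → γ)
    (hfg : (∑ ω, if f (U ω) = g (X ω) then p ω else 0) = 1)
    (hmc : cmi p X Y (fun ω => g (X ω)) = 0) :
    mi p (fun ω => (X ω, Y ω)) U ≥ ent p (fun ω => g (X ω)) ∧
    mi p (fun ω => (X ω, Y ω)) U = mi p X U := by
  obtain ⟨hp0, hp1⟩ := hp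
  -- a.s. equality f (U ω) = g (X ω)
  have haes : ∀ ω, p ω ≠ 0 → f (U ω) = g (X ω) := by
    intro ω hω
    by_contra hne
    have hzero : ∑ ω, (p ω - if f (U ω) = g (X ω) then p ω else 0) = 0 := by
      rw [Finset.sum_sub_distrib, hp1, hfg, sub_self]
    have hnn : ∀ ω' ∈ Finset.univ, 0 ≤ p ω' - (if f (U ω') = g (X ω') then p ω' else 0) := by
      intro ω' _
      split
      · simp
      · simpa using hp0 ω'
    have := (Finset.sum_eq_zero_iff_of_nonneg hnn).1 hzero ω (Finset.mem_univ ω)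
    rw [if_neg hne, sub_zero] at this
    exact hω this
  -- entropy rearrangements for goal 2
  have E1 : ent p (fun ω => (X ω, Y ω)) = ent p (fun ω => (Y ω, X ω)) := by
    have he : Function.Injective (fun w : 𝒴 × 𝒳 => (w.2, w.1)) := by
      intro w1 w2 h
      simp only [Prod.mk.injEq] at h
      exact Prod.ext h.2 h.1
    exact ent_comp_inj p (fun ω => (Y ω, X ω)) he
  have E2 : ent p (fun ω => ((X ω, Y ω), U ω)) = ent p (fun ω => ((U ω, Y ω), X ω)) := by
    have he : Function.Injective (fun w : (𝒰 × 𝒴) × 𝒳 => ((w.2, w.1.2), w.1.1)) := by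
      intro w1 w2 h
      simp only [Prod.mk.injEq] at h
      exact Prod.ext (Prod.ext h.2 h.1.2) h.1.1
    exact ent_comp_inj p (fun ω => ((U ω, Y ω), X ω)) he
  have E3 : ent p (fun ω => (X ω, U ω)) = ent p (fun ω => (U ω, X ω)) := by
    have he : Function.Injective (fun w : 𝒰 × 𝒳 => (w.2, w.1)) := by
      intro w1 w2 h
      simp only [Prod.mk.injEq] at h
      exact Prod.ext h.2 h.1
    exact ent_comp_inj p (fun ω => (U ω, X ω)) he
  have hgoal2 : mi p (fun ω => (X ω, Y ω)) U = mi p X U := by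
    simp only [mi] at *
    simp only [cmi] at h1
    rw [E1, E2, E3]
    linarith
  -- rearrangements for goal 1
  have F1 : ent p (fun ω => ((X ω, Y ω), g (X ω))) = ent p (fun ω => (X ω, Y ω)) := by
    have he : Function.Injective (fun v : 𝒳 × 𝒴 => (v, g v.1)) := by
      intro v1 v2 h
      simp only [Prod.mk.injEq] at h
      exact h.1
    exact ent_comp_inj p (fun ω => (X ω, Y ω)) he
  have F2 : ent p (fun ω => (U ω, g (X ω))) = ent p U := by
    have step1 : ent p (fun ω => (U ω, g (X ω))) = ent p (fun ω => (U ω, f (U ω))) :=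
      ent_congr_ae fun ω hω => by rw [haes ω hω]
    rw [step1]
    have he : Function.Injective (fun u : 𝒰 => (u, f u)) := by
      intro u1 u2 h
      simp only [Prod.mk.injEq] at h
      exact h.1
    exact ent_comp_inj p U he
  have F3 : ent p (fun ω => (((X ω, Y ω), U ω), g (X ω)))
      = ent p (fun ω => ((X ω, Y ω), U ω)) := by
    have he : Function.Injective (fun w : (𝒳 × 𝒴) × 𝒰 => (w, g w.1.1)) := by
      intro w1 w2 h
      simp only [Prod.mk.injEq] at h
      exact h.1
    exact ent_comp_inj p (fun ω => ((X ω, Y ω), U ω)) he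
  have hmi : mi p (fun ω => (X ω, Y ω)) U
      = cmi p (fun ω => (X ω, Y ω)) U (fun ω => g (X ω)) + ent p (fun ω => g (X ω)) := by
    simp only [mi, cmi]
    rw [F1, F2, F3]
    ring
  have hcmi := cmi_nonneg p ⟨hp0, hp1⟩ (fun ω => (X ω, Y ω)) U (fun ω => g (X ω))
  constructor
  · rw [hmi]
    linarith
  · exact hgoal2
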